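/- arXiv:1201.2891 — 2 statements merged into one kernel-verified Lean document; each statement's English description precedes it below -/
import Mathlib

section
/- ψ is differentiable on (0,q) and its derivative is given by ψ′(t) = E[Th′(√t Z + √(q−t) Z′)·Th′(√t Z + √(q−t) Z″)], where Th′(x) = β/cosh²(h + βx). Equivalently, ψ′(t) = ∫ [∫ Th′(√t x + √(q−t) y) φ(dy)]² φ(dx) > 0, where φ is the standard Gaussian measure on ℝ. -/
open MeasureTheory ProbabilityTheory

noncomputable def stdG : Measure ℝ := ProbabilityTheory.gaussianReal 0 1

/-- Th'(x) = β / cosh²(h + βx), the derivative of x ↦ tanh(h + βx). -/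
noncomputable def Th' (h β x : ℝ) : ℝ := β / (Real.cosh (h + β * x)) ^ 2

open Real Filter Set Topology
open scoped NNReal ENNReal

namespace SK

noncomputable def pdf (x : ℝ) : ℝ := gaussianPDFReal 0 1 x

lemma pdf_eq (x : ℝ) : pdf x = (Real.sqrt (2 * π))⁻¹ * Real.exp (-(1/2) * x ^ 2) := by
  simp only [pdf, gaussianPDFReal]
  norm_num
  left; ring

lemma pdf_nonneg (x : ℝ) : 0 ≤ pdf x := gaussianPDFReal_nonneg 0 1 x

lemma pdf_meas : Measurable pdf := measurable_gaussianPDFReal 0 1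

lemma pdf_int : Integrable pdf := integrable_gaussianPDFReal 0 1

instance : IsProbabilityMeasure stdG := by
  unfold stdG; infer_instance

lemma stdG_eq : stdG = volume.withDensity (fun x => ENNReal.ofReal (pdf x)) := by
  rw [stdG, gaussianReal_of_var_ne_zero 0 one_ne_zero]
  rfl

lemma integral_stdG (f : ℝ → ℝ) : ∫ x, f x ∂stdG = ∫ x, f x * pdf x := by
  rw [stdG_eq]
  have : (fun x => ENNReal.ofReal (pdf x))
      = (fun x => (((pdf x).toNNReal : ℝ≥0) : ℝ≥0∞)) := rfl
  rw [this, integral_withDensity_eq_integral_smul (pdf_meas.real_toNNReal) f]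
  refine integral_congr_ae (Eventually.of_forall fun x => ?_)
  simp [NNReal.smul_def, Real.coe_toNNReal _ (pdf_nonneg x), mul_comm]

lemma integrable_abs_mul_pdf : Integrable (fun x => |x| * pdf x) := by
  have h := ((integrable_rpow_mul_exp_neg_mul_sq (b := 1/2) (by norm_num)
    (s := 1) (by norm_num)).const_mul (Real.sqrt (2 * π))⁻¹).abs
  refine h.congr (Eventually.of_forall fun x => ?_)
  show |(Real.sqrt (2 * π))⁻¹ * (x ^ (1:ℝ) * Real.exp (-(1/2) * x ^ 2))| = |x| * pdf x
  rw [pdf_eq, Real.rpow_one, abs_mul, abs_mul,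
    abs_of_nonneg (inv_nonneg.mpr (Real.sqrt_nonneg _)),
    abs_of_nonneg (Real.exp_nonneg _)]
  ring

lemma integrable_abs_stdG : Integrable (fun x => |x|) stdG := by
  rw [stdG_eq, integrable_withDensity_iff pdf_meas.ennreal_ofReal
    (Eventually.of_forall fun x => ENNReal.ofReal_lt_top)]
  refine integrable_abs_mul_pdf.congr (Eventually.of_forall fun x => ?_)
  show |x| * pdf x = |x| * (ENNReal.ofReal (pdf x)).toReal
  rw [ENNReal.toReal_ofReal (pdf_nonneg x)]

lemma integrable_bdd {f : ℝ → ℝ} (hm : AEStronglyMeasurable f stdG) {C : ℝ}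
    (hC : ∀ x, |f x| ≤ C) : Integrable f stdG :=
  (integrable_const C).mono' hm (Eventually.of_forall fun x => by
    simpa using hC x)

lemma integrable_linear_bdd {f : ℝ → ℝ} (hm : AEStronglyMeasurable f stdG) {c d : ℝ}
    (hf : ∀ x, |f x| ≤ c * |x| + d) : Integrable f stdG :=
  ((integrable_abs_stdG.const_mul c).add (integrable_const d)).mono' hm
    (Eventually.of_forall fun x => by simpa using hf x)

lemma pdf_hasDeriv (x : ℝ) : HasDerivAt pdf (-x * pdf x) x := by
  have hfun : pdf = fun x => (Real.sqrt (2 * π))⁻¹ * Real.exp (-(1/2) * x ^ 2) :=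
    funext pdf_eq
  rw [hfun]
  have h1 : HasDerivAt (fun x : ℝ => -(1/2 : ℝ) * x ^ 2) (-x) x := by
    have := (hasDerivAt_pow 2 x).const_mul (-(1/2 : ℝ))
    refine this.congr_deriv ?_
    push_cast
    ring
  have h2 := (Real.hasDerivAt_exp (-(1/2) * x ^ 2)).comp x h1
  have h3 := h2.const_mul (Real.sqrt (2 * π))⁻¹
  refine HasDerivAt.congr_deriv (by exact h3) ?_
  ring

lemma pdf_tendsto_atTop : Tendsto pdf atTop (𝓝 0) := by
  have h1 : Tendsto (fun x : ℝ => (1/2 : ℝ) * x ^ 2) atTop atTop :=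
    (tendsto_pow_atTop two_ne_zero).const_mul_atTop (by norm_num)
  have h2 : Tendsto (fun x : ℝ => Real.exp (-(1/2 * x ^ 2))) atTop (𝓝 0) :=
    Real.tendsto_exp_neg_atTop_nhds_zero.comp h1
  have h3 := h2.const_mul (Real.sqrt (2 * π))⁻¹
  rw [mul_zero] at h3
  refine h3.congr fun x => ?_
  rw [pdf_eq]
  ring_nf

lemma pdf_tendsto_atBot : Tendsto pdf atBot (𝓝 0) := by
  have := pdf_tendsto_atTop.comp tendsto_neg_atBot_atTop
  refine this.congr fun x => ?_
  simp only [Function.comp_apply, pdf_eq, neg_sq]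

/-- Gaussian integration by parts (Stein's lemma) for C¹ bounded functions with
bounded derivative. -/
lemma ibp (f f' : ℝ → ℝ) (hd : ∀ x, HasDerivAt f (f' x) x) {C C' : ℝ}
    (hC : ∀ x, |f x| ≤ C) (hC' : ∀ x, |f' x| ≤ C') :
    ∫ x, x * f x ∂stdG = ∫ x, f' x ∂stdG := by
  have hf_cont : Continuous f :=
    continuous_iff_continuousAt.mpr fun x => (hd x).continuousAt
  have hf'_meas : Measurable f' := by
    have : f' = deriv f := funext fun x => ((hd x).deriv).symm
    rw [this]; exact measurable_deriv f
  set H : ℝ → ℝ := fun x => f x * pdf x with hH_def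
  set H' : ℝ → ℝ := fun x => f' x * pdf x - x * (f x * pdf x) with hH'_def
  have hH : ∀ x, HasDerivAt H (H' x) x := by
    intro x
    have := (hd x).mul (pdf_hasDeriv x)
    refine HasDerivAt.congr_deriv (by exact this) ?_
    simp only [hH'_def]
    ring
  have int1 : Integrable (fun x => f' x * pdf x) :=
    (pdf_int.const_mul C').mono' (hf'_meas.mul pdf_meas).aestronglyMeasurable
      (Eventually.of_forall fun x => by
        rw [Real.norm_eq_abs, abs_mul, abs_of_nonneg (pdf_nonneg x)]
        exact mul_le_mul_of_nonneg_right (hC' x) (pdf_nonneg x))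
  have int2 : Integrable (fun x => x * (f x * pdf x)) :=
    (integrable_abs_mul_pdf.const_mul C).mono'
      (measurable_id.mul (hf_cont.measurable.mul pdf_meas)).aestronglyMeasurable
      (Eventually.of_forall fun x => by
        rw [Real.norm_eq_abs, abs_mul, abs_mul, abs_of_nonneg (pdf_nonneg x)]
        calc |x| * (|f x| * pdf x) ≤ |x| * (C * pdf x) := by
              exact mul_le_mul_of_nonneg_left
                (mul_le_mul_of_nonneg_right (hC x) (pdf_nonneg x)) (abs_nonneg x)
          _ = C * (|x| * pdf x) := by ring)
  have intH' : Integrable H' := int1.sub int2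
  have hbnd : ∀ x, ‖H x‖ ≤ C * pdf x := by
    intro x
    rw [Real.norm_eq_abs]
    show |f x * pdf x| ≤ C * pdf x
    rw [abs_mul, abs_of_nonneg (pdf_nonneg x)]
    exact mul_le_mul_of_nonneg_right (hC x) (pdf_nonneg x)
  have hlim_top : Tendsto H atTop (𝓝 0) := by
    refine squeeze_zero_norm hbnd ?_
    simpa using pdf_tendsto_atTop.const_mul C
  have hlim_bot : Tendsto H atBot (𝓝 0) := by
    refine squeeze_zero_norm hbnd ?_
    simpa using pdf_tendsto_atBot.const_mul C
  have hIoi : ∫ x in Ioi (0:ℝ), H' x = 0 - H 0 :=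
    integral_Ioi_of_hasDerivAt_of_tendsto (hH 0).continuousAt.continuousWithinAt
      (fun x _ => hH x) intH'.integrableOn hlim_top
  have hIic : ∫ x in Iic (0:ℝ), H' x = H 0 - 0 :=
    integral_Iic_of_hasDerivAt_of_tendsto (hH 0).continuousAt.continuousWithinAt
      (fun x _ => hH x) intH'.integrableOn hlim_bot
  have hzero : ∫ x, H' x = 0 := by
    rw [← intervalIntegral.integral_Iic_add_Ioi intH'.integrableOn intH'.integrableOn, hIoi, hIic]
    ring
  have hsub : ∫ x, H' x = (∫ x, f' x * pdf x) - ∫ x, x * (f x * pdf x) :=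
    integral_sub int1 int2
  have key : (∫ x, x * (f x * pdf x)) = ∫ x, f' x * pdf x := by
    rw [hsub] at hzero; linarith
  rw [integral_stdG (fun x => x * f x), integral_stdG f']
  rw [← key]
  refine integral_congr_ae (Eventually.of_forall fun x => ?_)
  ring


/-! ### tanh lemmas -/

lemma hasDerivAt_tanh (x : ℝ) : HasDerivAt Real.tanh (1 / Real.cosh x ^ 2) x := by
  have hfun : Real.tanh = fun x => Real.sinh x / Real.cosh x :=
    funext fun x => Real.tanh_eq_sinh_div_cosh x
  rw [hfun]
  have h := (Real.hasDerivAt_sinh x).div (Real.hasDerivAt_cosh x) (Real.cosh_pos x).ne'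
  refine HasDerivAt.congr_deriv (by exact h) ?_
  have := Real.cosh_sq_sub_sinh_sq x
  field_simp
  nlinarith [this]

lemma abs_tanh_le (x : ℝ) : |Real.tanh x| ≤ 1 := by
  rw [Real.tanh_eq_sinh_div_cosh, abs_div, abs_of_pos (Real.cosh_pos x),
    div_le_one (Real.cosh_pos x)]
  nlinarith [Real.cosh_sq x, sq_abs (Real.sinh x), abs_nonneg (Real.sinh x),
    Real.cosh_pos x]

variable (h β : ℝ)

lemma hasDerivAt_Th (x : ℝ) :
    HasDerivAt (fun x => Real.tanh (h + β * x)) (Th' h β x) x := by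
  have h1 : HasDerivAt (fun x : ℝ => h + β * x) β x := by
    simpa using ((hasDerivAt_id x).const_mul β).const_add h
  have := (hasDerivAt_tanh (h + β * x)).comp x h1
  refine HasDerivAt.congr_deriv (by exact this) ?_
  rw [Th']; ring

noncomputable def Th'' (x : ℝ) : ℝ :=
  -2 * β ^ 2 * Real.tanh (h + β * x) / Real.cosh (h + β * x) ^ 2

lemma hasDerivAt_Th' (x : ℝ) : HasDerivAt (fun x => Th' h β x) (Th'' h β x) x := by
  have h1 : HasDerivAt (fun x : ℝ => h + β * x) β x := by
    simpa using ((hasDerivAt_id x).const_mul β).const_add h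
  set u := h + β * x with hu
  have hc : HasDerivAt (fun x : ℝ => Real.cosh (h + β * x) ^ 2)
      (2 * Real.cosh u ^ 1 * (Real.sinh u * β)) x := by
    exact (((Real.hasDerivAt_cosh u).comp x h1).pow 2)
  have hne : Real.cosh u ^ 2 ≠ 0 := (pow_pos (Real.cosh_pos u) 2).ne'
  have h2 := (hc.inv hne).const_mul β
  have heq : (fun x => Th' h β x) = fun x => β * (Real.cosh (h + β * x) ^ 2)⁻¹ := by
    funext y; rw [Th']; ring
  rw [heq]
  refine HasDerivAt.congr_deriv (by exact h2) ?_
  rw [Th'', Real.tanh_eq_sinh_div_cosh]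
  have hc0 := (Real.cosh_pos u).ne'
  field_simp
  ring

lemma Th'_pos (hβ : 0 < β) (x : ℝ) : 0 < Th' h β x :=
  div_pos hβ (pow_pos (Real.cosh_pos _) 2)

lemma abs_Th'_le (hβ : 0 < β) (x : ℝ) : |Th' h β x| ≤ β := by
  rw [Th', abs_div, abs_of_pos hβ, abs_of_pos (pow_pos (Real.cosh_pos _) 2)]
  have h1 : (1:ℝ) ≤ Real.cosh (h + β * x) ^ 2 := by
    nlinarith [Real.one_le_cosh (h + β * x)]
  exact div_le_self hβ.le h1

lemma abs_Th''_le (x : ℝ) : |Th'' h β x| ≤ 2 * β ^ 2 := by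
  rw [Th'', abs_div, abs_of_pos (pow_pos (Real.cosh_pos _) 2)]
  have h1 : (1:ℝ) ≤ Real.cosh (h + β * x) ^ 2 := by
    nlinarith [Real.one_le_cosh (h + β * x)]
  have h2 : |(-2) * β ^ 2 * Real.tanh (h + β * x)| ≤ 2 * β ^ 2 := by
    rw [abs_mul]
    calc |(-2) * β ^ 2| * |Real.tanh (h + β * x)| ≤ |(-2) * β ^ 2| * 1 :=
          mul_le_mul_of_nonneg_left (abs_tanh_le _) (abs_nonneg _)
      _ = 2 * β ^ 2 := by rw [mul_one, abs_mul]; simp [abs_of_nonneg (sq_nonneg β)]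
  calc |(-2) * β ^ 2 * Real.tanh (h + β * x)| / Real.cosh (h + β * x) ^ 2
      ≤ |(-2) * β ^ 2 * Real.tanh (h + β * x)| / 1 := by
        apply div_le_div_of_nonneg_left (abs_nonneg _) one_pos h1 |>.trans_eq rfl
    _ ≤ 2 * β ^ 2 := by rw [div_one]; exact h2

lemma continuous_tanh : Continuous Real.tanh := by
  have hfun : Real.tanh = fun x => Real.sinh x / Real.cosh x :=
    funext fun x => Real.tanh_eq_sinh_div_cosh x
  rw [hfun]
  exact Real.continuous_sinh.div Real.continuous_cosh fun x => (Real.cosh_pos x).ne'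

lemma continuous_Th : Continuous (fun x => Real.tanh (h + β * x)) :=
  continuous_tanh.comp (by fun_prop)
lemma continuous_Th' : Continuous (fun x => Th' h β x) := by
  unfold Th'; fun_prop (disch := intro x; exact (pow_pos (Real.cosh_pos _) 2).ne')
lemma continuous_Th'' : Continuous (fun x => Th'' h β x) := by
  unfold Th''
  refine Continuous.div ?_ (by fun_prop) fun x => (pow_pos (Real.cosh_pos _) 2).ne'
  exact continuous_const.mul (continuous_tanh.comp (by fun_prop))

/-! ### parametric integral lemmas -/

lemma cont_J {f : ℝ → ℝ} (hf : Continuous f) {C : ℝ} (hC : ∀ x, |f x| ≤ C) (a b : ℝ) :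
    Continuous (fun z => ∫ y, f (a * z + b * y) ∂stdG) := by
  refine continuous_of_dominated (fun z => ?_) (fun z => Eventually.of_forall fun y => ?_)
    (integrable_const C) (Eventually.of_forall fun y => ?_)
  · exact (hf.comp (by fun_prop)).aestronglyMeasurable
  · simpa [Real.norm_eq_abs] using hC _
  · exact hf.comp (by fun_prop)

lemma deriv_J_z {f f' : ℝ → ℝ} (hd : ∀ x, HasDerivAt f (f' x) x)
    (hfc : Continuous f) (hf'c : Continuous f') {C C' : ℝ}
    (hC : ∀ x, |f x| ≤ C) (hC' : ∀ x, |f' x| ≤ C') (a b z : ℝ) :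
    HasDerivAt (fun z => ∫ y, f (a * z + b * y) ∂stdG)
      (a * ∫ y, f' (a * z + b * y) ∂stdG) z := by
  have key := hasDerivAt_integral_of_dominated_loc_of_deriv_le (μ := stdG)
    (F := fun z y => f (a * z + b * y)) (F' := fun z y => a * f' (a * z + b * y))
    (x₀ := z) (s := Metric.ball z 1) (bound := fun _ => |a| * C') (Metric.ball_mem_nhds z one_pos)
    (Eventually.of_forall fun z => (hfc.comp (by fun_prop)).aestronglyMeasurable)
    (integrable_bdd (hfc.comp (by fun_prop)).aestronglyMeasurable (fun y => hC _))
    ((continuous_const.mul (hf'c.comp (by fun_prop))).aestronglyMeasurable)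
    (Eventually.of_forall fun y x hx => ?_)
    (integrable_const _)
    (Eventually.of_forall fun y x hx => ?_)
  · have := key.2
    rwa [integral_const_mul] at this
  · rw [Real.norm_eq_abs, abs_mul]
    exact mul_le_mul_of_nonneg_left (hC' _) (abs_nonneg a)
  · have h1 : HasDerivAt (fun z : ℝ => a * z + b * y) a x := by
      simpa using ((hasDerivAt_id x).const_mul a).add_const (b * y)
    have := (hd (a * x + b * y)).comp x h1
    exact HasDerivAt.congr_deriv (by exact this) (mul_comm _ _)


lemma deriv_J_t {q : ℝ} {f f' f'' : ℝ → ℝ}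
    (hd : ∀ x, HasDerivAt f (f' x) x) (hd' : ∀ x, HasDerivAt f' (f'' x) x)
    (hfc : Continuous f) (hf'c : Continuous f') (hf''c : Continuous f'')
    {C C' C'' : ℝ} (hC : ∀ x, |f x| ≤ C) (hC' : ∀ x, |f' x| ≤ C')
    (hC'' : ∀ x, |f'' x| ≤ C'') (z t : ℝ) (ht : t ∈ Ioo 0 q) :
    HasDerivAt (fun t => ∫ y, f (Real.sqrt t * z + Real.sqrt (q - t) * y) ∂stdG)
      (z / (2 * Real.sqrt t) * (∫ y, f' (Real.sqrt t * z + Real.sqrt (q - t) * y) ∂stdG)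
        - (1/2) * ∫ y, f'' (Real.sqrt t * z + Real.sqrt (q - t) * y) ∂stdG) t := by
  obtain ⟨ht0, htq⟩ := ht
  have hC'0 : 0 ≤ C' := (abs_nonneg _).trans (hC' 0)
  set ε := min t (q - t) / 2 with hε
  have hεm : 0 < min t (q - t) := lt_min ht0 (by linarith)
  have hε0 : 0 < ε := by rw [hε]; linarith
  have hs_pos : ∀ s ∈ Metric.ball t ε, t/2 < s ∧ (q-t)/2 < q - s := by
    intro s hs
    rw [Metric.mem_ball, Real.dist_eq, abs_lt] at hs
    have hl := min_le_left t (q - t)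
    have hr := min_le_right t (q - t)
    constructor
    · have : ε ≤ t/2 := by rw [hε]; linarith
      linarith [hs.1]
    · have : ε ≤ (q-t)/2 := by rw [hε]; linarith
      linarith [hs.2]
  have ht2 : (0:ℝ) < t/2 := by linarith
  have hq2 : (0:ℝ) < (q-t)/2 := by linarith
  have key := hasDerivAt_integral_of_dominated_loc_of_deriv_le (μ := stdG)
    (F := fun s y => f (Real.sqrt s * z + Real.sqrt (q - s) * y))
    (F' := fun s y => (z / (2 * Real.sqrt s) - y / (2 * Real.sqrt (q - s))) *
      f' (Real.sqrt s * z + Real.sqrt (q - s) * y))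
    (x₀ := t) (s := Metric.ball t ε)
    (bound := fun y => |z| / (2 * Real.sqrt (t/2)) * C'
      + C' / (2 * Real.sqrt ((q-t)/2)) * |y|)
    (Metric.ball_mem_nhds t hε0)
    (Eventually.of_forall fun s => (hfc.comp (by fun_prop)).aestronglyMeasurable)
    (integrable_bdd (hfc.comp (by fun_prop)).aestronglyMeasurable (fun y => hC _))
    (((continuous_const.sub (continuous_id.div_const _)).mul
      (hf'c.comp (by fun_prop))).aestronglyMeasurable)
    (Eventually.of_forall fun y s hs => ?_)
    ((integrable_const (|z| / (2 * Real.sqrt (t/2)) * C')).add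
      (integrable_abs_stdG.const_mul (C' / (2 * Real.sqrt ((q-t)/2)))))
    (Eventually.of_forall fun y s hs => ?_)
  · -- main conclusion
    have hder := key.2
    have ha : (0:ℝ) < Real.sqrt t := Real.sqrt_pos.mpr ht0
    have hb : (0:ℝ) < Real.sqrt (q - t) := Real.sqrt_pos.mpr (by linarith)
    set a := Real.sqrt t
    set b := Real.sqrt (q - t)
    have int_f' : Integrable (fun y => f' (a * z + b * y)) stdG :=
      integrable_bdd (hf'c.comp (by fun_prop)).aestronglyMeasurable (fun y => hC' _)
    have i1 : Integrable (fun y => z / (2*a) * f' (a * z + b * y)) stdG :=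
      int_f'.const_mul _
    have i2 : Integrable (fun y => y / (2*b) * f' (a * z + b * y)) stdG := by
      refine integrable_linear_bdd (c := C' / (2*b)) (d := 0)
        ((continuous_id.div_const _).mul (hf'c.comp (by fun_prop))).aestronglyMeasurable
        (fun y => ?_)
      rw [abs_mul, abs_div, abs_of_pos (by linarith : (0:ℝ) < 2*b), add_zero]
      rw [div_mul_eq_mul_div, div_mul_eq_mul_div, mul_comm C' |y|]
      gcongr
      exact hC' _
    have i2' : Integrable (fun y => y * f' (a * z + b * y)) stdG := by
      have := i2.const_mul (2*b)
      refine this.congr (Eventually.of_forall fun y => ?_)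
      field_simp
    have hibp : ∫ y, y * f' (a * z + b * y) ∂stdG
        = b * ∫ y, f'' (a * z + b * y) ∂stdG := by
      rw [← integral_const_mul]
      refine ibp (fun y => f' (a * z + b * y)) (fun y => b * f'' (a * z + b * y))
        (fun y => ?_) (C := C') (C' := |b| * C'') (fun y => hC' _) (fun y => ?_)
      · have h1 : HasDerivAt (fun y : ℝ => a * z + b * y) b y := by
          simpa using ((hasDerivAt_id y).const_mul b).const_add (a * z)
        have := (hd' (a * z + b * y)).comp y h1
        exact HasDerivAt.congr_deriv (by exact this) (mul_comm _ _)
      · rw [abs_mul]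
        exact mul_le_mul_of_nonneg_left (hC'' _) (abs_nonneg b)
    have hval : (∫ y, (z / (2*a) - y / (2*b)) * f' (a * z + b * y) ∂stdG)
        = z / (2*a) * (∫ y, f' (a * z + b * y) ∂stdG)
          - (1/2) * ∫ y, f'' (a * z + b * y) ∂stdG := by
      have : (∫ y, (z / (2*a) - y / (2*b)) * f' (a * z + b * y) ∂stdG)
          = (∫ y, z / (2*a) * f' (a * z + b * y) ∂stdG)
            - ∫ y, y / (2*b) * f' (a * z + b * y) ∂stdG := by
        rw [← integral_sub i1 i2]
        exact integral_congr_ae (Eventually.of_forall fun y => by ring)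
      rw [this, integral_const_mul]
      congr 1
      have : (∫ y, y / (2*b) * f' (a * z + b * y) ∂stdG)
          = (1/(2*b)) * ∫ y, y * f' (a * z + b * y) ∂stdG := by
        rw [← integral_const_mul]
        exact integral_congr_ae (Eventually.of_forall fun y => by ring)
      rw [this, hibp]
      field_simp
    rw [hval] at hder
    exact hder
  · -- bound
    obtain ⟨h1, h2⟩ := hs_pos s hs
    have hs0 : (0:ℝ) < s := lt_trans ht2 h1
    have hqs : (0:ℝ) < q - s := lt_trans hq2 h2
    have hsa : Real.sqrt (t/2) ≤ Real.sqrt s := Real.sqrt_le_sqrt h1.le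
    have hsb : Real.sqrt ((q-t)/2) ≤ Real.sqrt (q - s) := Real.sqrt_le_sqrt h2.le
    have hsa0 : (0:ℝ) < Real.sqrt (t/2) := Real.sqrt_pos.mpr ht2
    have hsb0 : (0:ℝ) < Real.sqrt ((q-t)/2) := Real.sqrt_pos.mpr hq2
    rw [Real.norm_eq_abs, abs_mul]
    have habs : |z / (2 * Real.sqrt s) - y / (2 * Real.sqrt (q - s))|
        ≤ |z| / (2 * Real.sqrt (t/2)) + |y| / (2 * Real.sqrt ((q-t)/2)) := by
      calc |z / (2 * Real.sqrt s) - y / (2 * Real.sqrt (q - s))|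
          ≤ |z / (2 * Real.sqrt s)| + |y / (2 * Real.sqrt (q - s))| := abs_sub _ _
        _ = |z| / (2 * Real.sqrt s) + |y| / (2 * Real.sqrt (q - s)) := by
            rw [abs_div, abs_div, abs_of_pos (by positivity : (0:ℝ) < 2 * Real.sqrt s),
              abs_of_pos (by positivity : (0:ℝ) < 2 * Real.sqrt (q - s))]
        _ ≤ |z| / (2 * Real.sqrt (t/2)) + |y| / (2 * Real.sqrt ((q-t)/2)) := by
            gcongr
    calc |z / (2 * Real.sqrt s) - y / (2 * Real.sqrt (q - s))|
          * |f' (Real.sqrt s * z + Real.sqrt (q - s) * y)|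
        ≤ (|z| / (2 * Real.sqrt (t/2)) + |y| / (2 * Real.sqrt ((q-t)/2))) * C' := by
          exact mul_le_mul habs (hC' _) (abs_nonneg _) (by positivity)
      _ = |z| / (2 * Real.sqrt (t/2)) * C' + C' / (2 * Real.sqrt ((q-t)/2)) * |y| := by
          ring
  · -- differentiability
    obtain ⟨h1, h2⟩ := hs_pos s hs
    have hs0 : (0:ℝ) < s := lt_trans ht2 h1
    have hqs : (0:ℝ) < q - s := lt_trans hq2 h2
    have hsq : HasDerivAt (fun s : ℝ => Real.sqrt s * z) (1/(2*Real.sqrt s) * z) s :=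
      (Real.hasDerivAt_sqrt hs0.ne').mul_const z
    have hqd : HasDerivAt (fun s : ℝ => q - s) (-1) s := by
      simpa using (hasDerivAt_id s).const_sub q
    have hsq2 : HasDerivAt (fun s : ℝ => Real.sqrt (q - s))
        (1/(2*Real.sqrt (q-s)) * (-1)) s :=
      (Real.hasDerivAt_sqrt hqs.ne').comp s hqd
    have hlin : HasDerivAt (fun s : ℝ => Real.sqrt s * z + Real.sqrt (q - s) * y)
        (1/(2*Real.sqrt s) * z + (1/(2*Real.sqrt (q-s)) * (-1)) * y) s :=
      hsq.add (hsq2.mul_const y)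
    have := (hd _).comp s hlin
    refine HasDerivAt.congr_deriv (by exact this) ?_
    ring


/-- Bound on J integrals. -/
lemma abs_integral_le {k : ℝ → ℝ} {C : ℝ} (hC : ∀ x, |k x| ≤ C) :
    |∫ x, k x ∂stdG| ≤ C := by
  have := norm_integral_le_of_norm_le_const (μ := stdG) (f := k) (C := C)
    (Eventually.of_forall fun x => by rw [Real.norm_eq_abs]; exact hC x)
  rw [Real.norm_eq_abs, probReal_univ] at this
  simpa using this

lemma abs_sq_le {x C : ℝ} (hx : |x| ≤ C) : |x ^ 2| ≤ C ^ 2 := by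
  rw [abs_pow]
  exact pow_le_pow_left₀ (abs_nonneg x) hx 2

lemma abs_mul_le {x y C D : ℝ} (hx : |x| ≤ C) (hy : |y| ≤ D) : |x * y| ≤ C * D := by
  rw [abs_mul]
  exact mul_le_mul hx hy (abs_nonneg _) ((abs_nonneg x).trans hx)

lemma integral_pos_of_pos {k : ℝ → ℝ} (hk : Integrable k stdG) (hpos : ∀ x, 0 < k x) :
    0 < ∫ x, k x ∂stdG := by
  rw [integral_pos_iff_support_of_nonneg_ae (Eventually.of_forall fun x => (hpos x).le) hk]
  have : Function.support k = univ := eq_univ_of_forall fun x => (hpos x).ne'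
  rw [this]
  simp

lemma sq_integral (k : ℝ → ℝ) :
    (∫ z', (∫ z'', k z' * k z'' ∂stdG) ∂stdG) = (∫ z', k z' ∂stdG) ^ 2 := by
  have h1 : ∀ z', (∫ z'', k z' * k z'' ∂stdG) = k z' * ∫ z'', k z'' ∂stdG :=
    fun z' => integral_const_mul _ _
  calc (∫ z', (∫ z'', k z' * k z'' ∂stdG) ∂stdG)
      = ∫ z', k z' * ∫ z'', k z'' ∂stdG ∂stdG :=
        integral_congr_ae (Eventually.of_forall fun z' => h1 z')
    _ = (∫ z', k z' ∂stdG) * ∫ z'', k z'' ∂stdG := integral_mul_const _ _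
    _ = (∫ z', k z' ∂stdG) ^ 2 := by rw [sq]


end SK

open SK

/-- ψ is differentiable on (0,q) with
ψ′(t) = E[Th′(√t Z + √(q−t) Z′)·Th′(√t Z + √(q−t) Z″)], which equals
∫ [∫ Th′(√t x + √(q−t) y) φ(dy)]² φ(dx) > 0. -/
theorem psi_derivative
    (h β q : ℝ) (hh : 0 < h) (hβ : 0 < β) (hq0 : 0 < q) (hq1 : q < 1)
    (hq : q = ∫ z, Real.tanh (h + β * (Real.sqrt q * z)) ^ 2 ∂stdG)
    (ψ : ℝ → ℝ)
    (hψ : ∀ t : ℝ, ψ t =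
      ∫ z, (∫ z', (∫ z'',
        Real.tanh (h + β * (Real.sqrt t * z + Real.sqrt (q - t) * z')) *
        Real.tanh (h + β * (Real.sqrt t * z + Real.sqrt (q - t) * z''))
        ∂stdG) ∂stdG) ∂stdG) :
    ∀ t ∈ Set.Ioo (0 : ℝ) q,
      HasDerivAt ψ
        (∫ z, (∫ z', (∫ z'',
          Th' h β (Real.sqrt t * z + Real.sqrt (q - t) * z') *
          Th' h β (Real.sqrt t * z + Real.sqrt (q - t) * z'')
          ∂stdG) ∂stdG) ∂stdG) t ∧
      (∫ z, (∫ z', (∫ z'',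
          Th' h β (Real.sqrt t * z + Real.sqrt (q - t) * z') *
          Th' h β (Real.sqrt t * z + Real.sqrt (q - t) * z'')
          ∂stdG) ∂stdG) ∂stdG)
        = ∫ x, (∫ y, Th' h β (Real.sqrt t * x + Real.sqrt (q - t) * y) ∂stdG) ^ 2 ∂stdG ∧
      0 < ∫ x, (∫ y, Th' h β (Real.sqrt t * x + Real.sqrt (q - t) * y) ∂stdG) ^ 2 ∂stdG := by
  intro t ht
  obtain ⟨ht0, htq⟩ := ht
  -- notation
  set Thf : ℝ → ℝ := fun x => Real.tanh (h + β * x) with hThf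
  have hdTh : ∀ x, HasDerivAt Thf (Th' h β x) x := hasDerivAt_Th h β
  have hdTh' : ∀ x, HasDerivAt (Th' h β) (Th'' h β x) x := hasDerivAt_Th' h β
  have hbTh : ∀ x, |Thf x| ≤ 1 := fun x => abs_tanh_le _
  have hbTh' : ∀ x, |Th' h β x| ≤ β := abs_Th'_le h β hβ
  have hbTh'' : ∀ x, |Th'' h β x| ≤ 2 * β ^ 2 := abs_Th''_le h β
  have hcTh := continuous_Th h β
  have hcTh' := continuous_Th' h β
  have hcTh'' := continuous_Th'' h β
  set g : ℝ → ℝ → ℝ := fun s z => ∫ y, Thf (Real.sqrt s * z + Real.sqrt (q - s) * y) ∂stdG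
    with hg_def
  set G1 : ℝ → ℝ → ℝ :=
    fun s z => ∫ y, Th' h β (Real.sqrt s * z + Real.sqrt (q - s) * y) ∂stdG with hG1_def
  set G2 : ℝ → ℝ → ℝ :=
    fun s z => ∫ y, Th'' h β (Real.sqrt s * z + Real.sqrt (q - s) * y) ∂stdG with hG2_def
  have hgb : ∀ s z, |g s z| ≤ 1 := fun s z => abs_integral_le (fun y => hbTh _)
  have hG1b : ∀ s z, |G1 s z| ≤ β := fun s z => abs_integral_le (fun y => hbTh' _)
  have hG2b : ∀ s z, |G2 s z| ≤ 2 * β ^ 2 := fun s z => abs_integral_le (fun y => hbTh'' _)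
  have hgc : ∀ s, Continuous (fun z => g s z) := fun s => cont_J hcTh hbTh _ _
  have hG1c : ∀ s, Continuous (fun z => G1 s z) := fun s => cont_J hcTh' hbTh' _ _
  have hG2c : ∀ s, Continuous (fun z => G2 s z) := fun s => cont_J hcTh'' hbTh'' _ _
  -- Step A : factorization
  have hψ_eq : ∀ s : ℝ, ψ s = ∫ z, (g s z) ^ 2 ∂stdG := by
    intro s
    rw [hψ s]
    refine integral_congr_ae (Eventually.of_forall fun z => ?_)
    exact sq_integral (fun w => Thf (Real.sqrt s * z + Real.sqrt (q - s) * w))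
  have htriple : (∫ z, (∫ z', (∫ z'',
          Th' h β (Real.sqrt t * z + Real.sqrt (q - t) * z') *
          Th' h β (Real.sqrt t * z + Real.sqrt (q - t) * z'')
          ∂stdG) ∂stdG) ∂stdG) = ∫ z, (G1 t z) ^ 2 ∂stdG := by
    refine integral_congr_ae (Eventually.of_forall fun z => ?_)
    exact sq_integral (fun w => Th' h β (Real.sqrt t * z + Real.sqrt (q - t) * w))
  -- positivity of t-related quantities
  have ha : (0:ℝ) < Real.sqrt t := Real.sqrt_pos.mpr ht0
  have hb : (0:ℝ) < Real.sqrt (q - t) := Real.sqrt_pos.mpr (by linarith)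
  have ht2 : (0:ℝ) < t/2 := by linarith
  have hsa0 : (0:ℝ) < Real.sqrt (t/2) := Real.sqrt_pos.mpr ht2
  -- Step B : differentiate under the integral sign
  have hgt : ∀ z, ∀ s ∈ Ioo (0:ℝ) q, HasDerivAt (fun s => g s z)
      (z / (2 * Real.sqrt s) * G1 s z - (1/2) * G2 s z) s := fun z s hs =>
    deriv_J_t hdTh hdTh' hcTh hcTh' hcTh'' hbTh hbTh' hbTh'' z s hs
  set D : ℝ → ℝ → ℝ := fun s z =>
    2 * g s z * (z / (2 * Real.sqrt s) * G1 s z - (1/2) * G2 s z) with hD_def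
  have hεm : 0 < min t (q - t) := lt_min ht0 (by linarith)
  set ε := min t (q - t) / 2 with hε
  have hε0 : 0 < ε := by rw [hε]; linarith
  have hball : ∀ s ∈ Metric.ball t ε, s ∈ Ioo (0:ℝ) q ∧ t/2 < s := by
    intro s hs
    rw [Metric.mem_ball, Real.dist_eq, abs_lt] at hs
    have hl := min_le_left t (q - t)
    have hr := min_le_right t (q - t)
    have h1 : ε ≤ t/2 := by rw [hε]; linarith
    have h2 : ε ≤ (q-t)/2 := by rw [hε]; linarith
    exact ⟨⟨by linarith [hs.1], by linarith [hs.2]⟩, by linarith [hs.1]⟩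
  have key := hasDerivAt_integral_of_dominated_loc_of_deriv_le (μ := stdG)
    (F := fun s z => (g s z) ^ 2) (F' := D) (x₀ := t) (s := Metric.ball t ε)
    (bound := fun z => β / Real.sqrt (t/2) * |z| + 2 * β ^ 2)
    (Metric.ball_mem_nhds t hε0)
    (Eventually.of_forall fun s => ((hgc s).pow 2).aestronglyMeasurable)
    (integrable_bdd ((hgc t).pow 2).aestronglyMeasurable (C := 1) (fun z => by
      simpa using abs_sq_le (hgb t z)))
    ((continuous_const.mul (hgc t) |>.mul
      (((continuous_id.div_const _).mul (hG1c t)).sub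
        (continuous_const.mul (hG2c t)))).aestronglyMeasurable)
    (Eventually.of_forall fun z s hs => ?_)
    ((integrable_abs_stdG.const_mul _).add (integrable_const _))
    (Eventually.of_forall fun z s hs => ?_)
  rotate_left
  · -- bound for D
    obtain ⟨⟨hs0, hsq⟩, hst2⟩ := hball s hs
    have hsa : Real.sqrt (t/2) ≤ Real.sqrt s := Real.sqrt_le_sqrt hst2.le
    have hss : (0:ℝ) < Real.sqrt s := Real.sqrt_pos.mpr hs0
    rw [Real.norm_eq_abs, hD_def]
    have hin : |z / (2 * Real.sqrt s) * G1 s z - (1/2) * G2 s z|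
        ≤ |z| / (2 * Real.sqrt (t/2)) * β + (1/2) * (2 * β ^ 2) := by
      have e0 : |z / (2 * Real.sqrt s) * G1 s z - (1/2) * G2 s z|
          ≤ |z / (2 * Real.sqrt s) * G1 s z| + |(1/2) * G2 s z| := abs_sub _ _
      have e1 : |z / (2 * Real.sqrt s) * G1 s z| ≤ |z| / (2 * Real.sqrt s) * β := by
        rw [abs_mul, abs_div, abs_of_pos (by positivity : (0:ℝ) < 2 * Real.sqrt s)]
        exact mul_le_mul_of_nonneg_left (hG1b s z) (by positivity)
      have e2 : |(1/2 : ℝ) * G2 s z| ≤ (1/2) * (2 * β ^ 2) := by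
        rw [abs_mul, abs_of_pos (by norm_num : (0:ℝ) < 1/2)]
        exact mul_le_mul_of_nonneg_left (hG2b s z) (by norm_num)
      have e3 : |z| / (2 * Real.sqrt s) * β ≤ |z| / (2 * Real.sqrt (t/2)) * β := by
        refine mul_le_mul_of_nonneg_right ?_ hβ.le
        exact div_le_div_of_nonneg_left (abs_nonneg z) (by positivity) (by linarith)
      linarith
    have e4 : |2 * g s z * (z / (2 * Real.sqrt s) * G1 s z - (1/2) * G2 s z)|
        ≤ 2 * 1 * (|z| / (2 * Real.sqrt (t/2)) * β + (1/2) * (2 * β ^ 2)) := by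
      rw [abs_mul]
      refine mul_le_mul ?_ hin (abs_nonneg _) (by norm_num)
      rw [abs_mul, abs_of_pos (by norm_num : (0:ℝ) < 2)]
      exact mul_le_mul_of_nonneg_left (hgb s z) (by norm_num)
    refine e4.trans (le_of_eq ?_)
    field_simp
  · -- differentiability of (g s z)^2 in s
    obtain ⟨hsIoo, -⟩ := hball s hs
    have hd := hgt z s hsIoo
    have hsq : (fun s => (g s z) ^ 2) = fun s => g s z * g s z := by
      funext u; rw [sq]
    rw [hsq]
    have := hd.mul hd
    refine HasDerivAt.congr_deriv (by exact this) ?_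
    rw [hD_def]
    ring
  -- conclude
  have hder : HasDerivAt ψ (∫ z, D t z ∂stdG) t := by
    have hfun : ψ = fun s => ∫ z, (g s z) ^ 2 ∂stdG := funext hψ_eq
    rw [hfun]
    exact key.2
  -- Step C : integration by parts in z
  set a := Real.sqrt t
  set b := Real.sqrt (q - t)
  have hgz : ∀ z, HasDerivAt (fun z => g t z) (a * G1 t z) z := fun z =>
    deriv_J_z hdTh hcTh hcTh' hbTh hbTh' a b z
  have hG1z : ∀ z, HasDerivAt (fun z => G1 t z) (a * G2 t z) z := fun z =>
    deriv_J_z hdTh' hcTh' hcTh'' hbTh' hbTh'' a b z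
  set K : ℝ → ℝ := fun z => g t z * G1 t z / a with hK_def
  have hK : ∀ z, HasDerivAt K ((G1 t z) ^ 2 + g t z * G2 t z) z := by
    intro z
    have := ((hgz z).mul (hG1z z)).div_const a
    refine HasDerivAt.congr_deriv (by exact this) ?_
    field_simp
  have hKb : ∀ z, |K z| ≤ β / a := by
    intro z
    rw [hK_def]
    simp only
    rw [abs_div, abs_of_pos ha]
    refine (div_le_div_iff_of_pos_right ha).mpr ?_
    simpa using abs_mul_le (hgb t z) (hG1b t z)
  have hK'b : ∀ z, |(G1 t z) ^ 2 + g t z * G2 t z| ≤ β ^ 2 + 2 * β ^ 2 := by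
    intro z
    have e1 := abs_sq_le (hG1b t z)
    have e2 := abs_mul_le (hgb t z) (hG2b t z)
    calc |(G1 t z) ^ 2 + g t z * G2 t z| ≤ |(G1 t z) ^ 2| + |g t z * G2 t z| := abs_add_le _ _
      _ ≤ β ^ 2 + 1 * (2 * β ^ 2) := add_le_add e1 e2
      _ = β ^ 2 + 2 * β ^ 2 := by ring
  have hibpK : ∫ z, z * K z ∂stdG = ∫ z, ((G1 t z) ^ 2 + g t z * G2 t z) ∂stdG :=
    ibp K _ hK hKb hK'b
  -- integrabilities
  have int_G1sq : Integrable (fun z => (G1 t z) ^ 2) stdG :=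
    integrable_bdd ((hG1c t).pow 2).aestronglyMeasurable (C := β ^ 2)
      (fun z => abs_sq_le (hG1b t z))
  have int_gG2 : Integrable (fun z => g t z * G2 t z) stdG :=
    integrable_bdd ((hgc t).mul (hG2c t)).aestronglyMeasurable (C := 2 * β ^ 2) (fun z => by
      rw [abs_mul]
      calc |g t z| * |G2 t z| ≤ 1 * (2 * β ^ 2) :=
          mul_le_mul (hgb t z) (hG2b t z) (abs_nonneg _) one_pos.le
        _ = 2 * β ^ 2 := one_mul _)
  have int_zK : Integrable (fun z => z * K z) stdG := by
    refine integrable_linear_bdd (c := β / a) (d := 0)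
      (continuous_id.mul (((hgc t).mul (hG1c t)).div_const a)).aestronglyMeasurable
      (fun z => ?_)
    rw [abs_mul, add_zero, mul_comm (β / a) |z|]
    exact mul_le_mul_of_nonneg_left (hKb z) (abs_nonneg z)
  have hDval : ∫ z, D t z ∂stdG = ∫ z, (G1 t z) ^ 2 ∂stdG := by
    have h1 : ∫ z, D t z ∂stdG = (∫ z, z * K z ∂stdG) - ∫ z, g t z * G2 t z ∂stdG := by
      rw [← integral_sub int_zK int_gG2]
      refine integral_congr_ae (Eventually.of_forall fun z => ?_)
      rw [hD_def, hK_def]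
      simp only
      field_simp
      ring
    rw [h1, hibpK, integral_add int_G1sq int_gG2]
    ring
  rw [hDval] at hder
  -- Step D : positivity
  have hG1pos : ∀ z, 0 < G1 t z := fun z =>
    integral_pos_of_pos
      (integrable_bdd (hcTh'.comp (by fun_prop)).aestronglyMeasurable (fun y => hbTh' _))
      (fun y => Th'_pos h β hβ _)
  have hpos : 0 < ∫ z, (G1 t z) ^ 2 ∂stdG :=
    integral_pos_of_pos int_G1sq (fun z => pow_pos (hG1pos z) 2)
  refine ⟨?_, htriple, htriple ▸ hpos⟩
  rw [htriple]
  exact hder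
end

section
/- Let c > 0. Then there exist constants K, C > 0 depending only on c such that the following holds: for every N and every centered jointly Gaussian random vector ζ = (ζ₁,…,ζ_N) with E[ζᵢ²] ≤ c for all i and N·|E[ζᵢζⱼ]| ≤ c for all i ≠ j, one has P( N⁻¹ Σᵢ₌₁^N |ζᵢ| ≥ K ) ≤ C·exp(−N/C). -/
open MeasureTheory ProbabilityTheory
open scoped NNReal ENNReal

section Helpers
open Real


lemma sq_gauss_int (b : ℝ) (hb : 0 < b) :
    Integrable (fun x : ℝ => x ^ 2 * Real.exp (-b * x ^ 2)) := by
  have := integrable_rpow_mul_exp_neg_mul_sq hb (by norm_num : (-1:ℝ) < 2)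
  have h2 : ∀ x : ℝ, x ^ (2:ℝ) = x ^ (2:ℕ) := fun x => by
    rw [← Real.rpow_natCast x 2]; norm_num
  simpa [h2] using this

lemma integral_sq_gauss (b : ℝ) (hb : 0 < b) :
    ∫ x : ℝ, x ^ 2 * Real.exp (-b * x ^ 2) = (2*b)⁻¹ * Real.sqrt (π / b) := by
  have hderiv : ∀ x : ℝ, HasDerivAt (fun x : ℝ => x * Real.exp (-b * x ^ 2))
      (Real.exp (-b * x ^ 2) - 2*b*(x ^ 2 * Real.exp (-b * x ^ 2))) x := by
    intro x
    have h := (hasDerivAt_id x).mul (((hasDerivAt_pow 2 x).const_mul (-b)).exp)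
    refine h.congr_deriv ?_
    simp; ring
  have hint : Integrable (fun x : ℝ =>
      Real.exp (-b * x ^ 2) - 2*b*(x ^ 2 * Real.exp (-b * x ^ 2))) :=
    (integrable_exp_neg_mul_sq hb).sub ((sq_gauss_int b hb).const_mul _)
  have h0 := integral_eq_zero_of_hasDerivAt_of_integrable hderiv hint
    (integrable_mul_exp_neg_mul_sq hb)
  rw [integral_sub (integrable_exp_neg_mul_sq hb) ((sq_gauss_int b hb).const_mul _),
    integral_const_mul, integral_gaussian] at h0
  have hb' : (2*b) ≠ 0 := by positivity
  field_simp at h0 ⊢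
  linarith



lemma integrable_sq_gaussianReal (v : ℝ≥0) :
    Integrable (fun x : ℝ => x ^ 2) (gaussianReal 0 v) := by
  by_cases hv : v = 0
  · rw [hv, gaussianReal_zero_var]
    constructor
    · exact (measurable_id.pow_const 2).aestronglyMeasurable
    · simp [HasFiniteIntegral, lintegral_dirac]
  · rw [gaussianReal_of_var_ne_zero _ hv, gaussianPDF_def]
    have hvpos : (0:ℝ) < v := lt_of_le_of_ne (v.coe_nonneg) (by exact_mod_cast (Ne.symm hv))
    rw [integrable_withDensity_iff (measurable_gaussianPDFReal 0 v).ennreal_ofReal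
      (Filter.Eventually.of_forall fun x => ENNReal.ofReal_lt_top)]
    have : ∀ x : ℝ, x ^ 2 * (ENNReal.ofReal (gaussianPDFReal 0 v x)).toReal
        = (√(2 * π * v))⁻¹ * (x ^ 2 * Real.exp (-(2*(v:ℝ))⁻¹ * x ^ 2)) := by
      intro x
      rw [ENNReal.toReal_ofReal (gaussianPDFReal_nonneg 0 v x), gaussianPDFReal]
      rw [sub_zero,
        show Real.exp (-x^2/(2*(v:ℝ))) = Real.exp (-(2*(v:ℝ))⁻¹ * x^2) from by congr 1; ring]
      ring
    simp only [this]
    exact ((sq_gauss_int _ (by positivity)).const_mul _)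

lemma integral_sq_gaussianReal (v : ℝ≥0) :
    ∫ x, x ^ 2 ∂(gaussianReal 0 v) = (v:ℝ) := by
  by_cases hv : v = 0
  · simp [hv, gaussianReal_zero_var]
  · have hvpos : (0:ℝ) < v := lt_of_le_of_ne (v.coe_nonneg) (by exact_mod_cast (Ne.symm hv))
    rw [gaussianReal_of_var_ne_zero _ hv, gaussianPDF_def]
    have hrw : (fun x : ℝ => ENNReal.ofReal (gaussianPDFReal 0 v x))
        = fun x => ((Real.toNNReal (gaussianPDFReal 0 v x) : ℝ≥0) : ℝ≥0∞) := by
      funext x; rfl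
    rw [hrw, integral_withDensity_eq_integral_smul
      ((measurable_gaussianPDFReal 0 v).real_toNNReal)]
    have : ∀ x : ℝ, (Real.toNNReal (gaussianPDFReal 0 v x)) • (x^2)
        = (√(2 * π * v))⁻¹ * (x ^ 2 * Real.exp (-(2*(v:ℝ))⁻¹ * x ^ 2)) := by
      intro x
      rw [NNReal.smul_def, smul_eq_mul,
        Real.coe_toNNReal _ (gaussianPDFReal_nonneg 0 v x), gaussianPDFReal, sub_zero,
        show Real.exp (-x^2/(2*(v:ℝ))) = Real.exp (-(2*(v:ℝ))⁻¹ * x^2) from by congr 1; ring]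
      ring
    simp only [this]
    rw [integral_const_mul, integral_sq_gauss _ (by positivity)]
    rw [show π / (2*(v:ℝ))⁻¹ = 2*π*v by field_simp]
    have h1 : (0:ℝ) < 2*π*v := by positivity
    have h2 : √(2*π*(v:ℝ)) ≠ 0 := by positivity
    field_simp


lemma lintegral_exp_gaussianReal (v : ℝ≥0) (t : ℝ) :
    ∫⁻ x, ENNReal.ofReal (Real.exp (t*x)) ∂(gaussianReal 0 v)
      = ENNReal.ofReal (Real.exp ((v:ℝ)*t^2/2)) := by
  by_cases hv : v = 0
  · rw [hv, gaussianReal_zero_var, lintegral_dirac]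
    simp
  · have hvpos : (0:ℝ) < v := lt_of_le_of_ne (v.coe_nonneg) (by exact_mod_cast (Ne.symm hv))
    rw [gaussianReal_of_var_ne_zero _ hv,
      lintegral_withDensity_eq_lintegral_mul _ (measurable_gaussianPDF 0 v)
        ((measurable_id'.const_mul t).exp.ennreal_ofReal)]
    have hpt : ∀ x : ℝ, (gaussianPDF 0 v x) * ENNReal.ofReal (Real.exp (t*x))
        = ENNReal.ofReal (Real.exp ((v:ℝ)*t^2/2)) * ENNReal.ofReal (gaussianPDFReal ((v:ℝ)*t) v x) := by
      intro x
      rw [gaussianPDF, ← ENNReal.ofReal_mul (gaussianPDFReal_nonneg 0 v x),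
        ← ENNReal.ofReal_mul (Real.exp_pos _).le]
      congr 1
      rw [gaussianPDFReal, gaussianPDFReal, sub_zero]
      have key : Real.exp (-x^2/(2*(v:ℝ))) * Real.exp (t*x)
          = Real.exp ((v:ℝ)*t^2/2) * Real.exp (-(x - (v:ℝ)*t)^2/(2*(v:ℝ))) := by
        rw [← Real.exp_add, ← Real.exp_add]
        congr 1
        field_simp
        ring
      calc (√(2 * π * v))⁻¹ * Real.exp (-x^2/(2*(v:ℝ))) * Real.exp (t*x)
          = (√(2 * π * v))⁻¹ * (Real.exp (-x^2/(2*(v:ℝ))) * Real.exp (t*x)) := by ring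
        _ = (√(2 * π * v))⁻¹ * (Real.exp ((v:ℝ)*t^2/2) * Real.exp (-(x - (v:ℝ)*t)^2/(2*(v:ℝ)))) := by
            rw [key]
        _ = _ := by ring
    simp only [Pi.mul_apply]
    rw [lintegral_congr hpt, lintegral_const_mul _ ((measurable_gaussianPDFReal _ _).ennreal_ofReal),
      lintegral_gaussianPDFReal_eq_one _ hv, mul_one]

lemma gaussianReal_tail (v : ℝ≥0) (K t : ℝ) (ht : 0 ≤ t) :
    gaussianReal 0 v {x | K ≤ x} ≤ ENNReal.ofReal (Real.exp ((v:ℝ)*t^2/2 - t*K)) := by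
  have h1 : gaussianReal 0 v {x | K ≤ x} = ∫⁻ x in {x | K ≤ x}, 1 ∂(gaussianReal 0 v) :=
    (setLIntegral_one _).symm
  rw [h1]
  have h2 : ∫⁻ x in {x | K ≤ x}, 1 ∂(gaussianReal 0 v)
      ≤ ∫⁻ x in {x | K ≤ x}, ENNReal.ofReal (Real.exp (t*x - t*K)) ∂(gaussianReal 0 v) := by
    apply setLIntegral_mono (((measurable_id'.const_mul t).sub measurable_const).exp.ennreal_ofReal)
    intro x hx
    rw [show (1:ℝ≥0∞) = ENNReal.ofReal 1 by simp]
    apply ENNReal.ofReal_le_ofReal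
    rw [← Real.exp_zero]
    apply Real.exp_le_exp.mpr
    have : (0:ℝ) ≤ x - K := sub_nonneg.mpr hx
    show 0 ≤ t*x - t*K
    nlinarith
  refine h2.trans ?_
  refine (setLIntegral_le_lintegral _ _).trans ?_
  have : ∀ x : ℝ, ENNReal.ofReal (Real.exp (t*x - t*K))
      = ENNReal.ofReal (Real.exp (-(t*K))) * ENNReal.ofReal (Real.exp (t*x)) := by
    intro x
    rw [← ENNReal.ofReal_mul (Real.exp_pos _).le, ← Real.exp_add]
    congr 2
    ring
  simp only [this]
  rw [lintegral_const_mul _ ((measurable_id'.const_mul t).exp.ennreal_ofReal),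
    lintegral_exp_gaussianReal, ← ENNReal.ofReal_mul (Real.exp_pos _).le, ← Real.exp_add]
  apply ENNReal.ofReal_le_ofReal
  apply Real.exp_le_exp.mpr
  linarith

end Helpers

/-- for every c > 0 there are K, C > 0 (depending only on c) such that
for every N and every centered jointly Gaussian vector ζ = (ζ₁,…,ζ_N) with
E[ζᵢ²] ≤ c and N·|E[ζᵢζⱼ]| ≤ c for i ≠ j, one has
P(N⁻¹ Σ|ζᵢ| ≥ K) ≤ C·exp(−N/C). -/



theorem gaussian_abs_mean_large_deviation (c : ℝ) (hc : 0 < c) :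
    ∃ K C : ℝ, 0 < K ∧ 0 < C ∧
      ∀ (Ω : Type) [MeasureSpace Ω], IsProbabilityMeasure (ℙ : Measure Ω) →
      ∀ (N : ℕ) (ζ : Ω → Fin N → ℝ),
        (∀ i : Fin N, Measurable fun ω => ζ ω i) →
        (∀ a : Fin N → ℝ, ∃ v : NNReal,
          Measure.map (fun ω => ∑ i, a i * ζ ω i) ℙ = gaussianReal 0 v) →
        (∀ i : Fin N, ∫ ω, (ζ ω i) ^ 2 ∂ℙ ≤ c) →
        (∀ i j : Fin N, i ≠ j → (N : ℝ) * |∫ ω, ζ ω i * ζ ω j ∂ℙ| ≤ c) →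
        ℙ {ω | K ≤ (N : ℝ)⁻¹ * ∑ i, |ζ ω i|} ≤
          ENNReal.ofReal (C * Real.exp (-(N : ℝ) / C)) := by
  have hL : 0 < Real.log 2 := Real.log_pos (by norm_num)
  refine ⟨Real.sqrt (6*c*(Real.log 2 + 1)), 1, Real.sqrt_pos.mpr (by positivity), one_pos, ?_⟩
  intro Ω _ hP N ζ hmeas hgauss hvar hcov
  haveI := hP
  set L : ℝ := Real.log 2 with hLdef
  set K : ℝ := Real.sqrt (6*c*(L + 1)) with hKdef
  have hKpos : 0 < K := Real.sqrt_pos.mpr (by positivity)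
  have hK2 : K^2 = 6*c*(L+1) := Real.sq_sqrt (by positivity)
  rw [show (1:ℝ) * Real.exp (-(N:ℝ)/1) = Real.exp (-(N:ℝ)) by simp]
  rcases Nat.eq_zero_or_pos N with hN0 | hNpos
  · subst hN0
    have : {ω : Ω | K ≤ ((0:ℕ) : ℝ)⁻¹ * ∑ i : Fin 0, |ζ ω i|} = ∅ := by
      ext ω; simp [not_le.mpr hKpos]
    rw [this]
    simp
  have hNr : (0:ℝ) < N := by exact_mod_cast hNpos
  -- sign vectors
  set aa : (Fin N → Bool) → Fin N → ℝ :=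
    fun ε i => (if ε i then (1:ℝ) else -1) * (N:ℝ)⁻¹ with haa
  -- integrability of products
  have hsq : ∀ i, Integrable (fun ω => (ζ ω i)^2) ℙ := by
    intro i
    obtain ⟨vi, hvi⟩ := hgauss (fun k => if k = i then 1 else 0)
    have heq : (fun ω => ∑ k, (if k = i then (1:ℝ) else 0) * ζ ω k) = fun ω => ζ ω i := by
      funext ω
      simp [ite_mul, Finset.sum_ite_eq']
    rw [heq] at hvi
    exact (integrable_map_measure
      (f := fun ω => ζ ω i) (g := fun x : ℝ => x ^ 2)
      (by rw [hvi]; exact (integrable_sq_gaussianReal vi).aestronglyMeasurable)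
      (hmeas i).aemeasurable).mp (by rw [hvi]; exact integrable_sq_gaussianReal vi)
  have hprod : ∀ i j, Integrable (fun ω => ζ ω i * ζ ω j) ℙ := by
    intro i j
    refine Integrable.mono' ((hsq i).add (hsq j)) ?_ ?_
    · exact ((hmeas i).mul (hmeas j)).aestronglyMeasurable
    · refine Filter.Eventually.of_forall fun ω => ?_
      simp only [Pi.add_apply]
      rw [Real.norm_eq_abs, abs_mul]
      nlinarith [sq_nonneg (|ζ ω i| - |ζ ω j|), sq_abs (ζ ω i), sq_abs (ζ ω j),
        abs_nonneg (ζ ω i), abs_nonneg (ζ ω j)]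
  -- per sign vector tail bound
  have hper : ∀ ε : Fin N → Bool,
      ℙ {ω | K ≤ ∑ i, aa ε i * ζ ω i} ≤ ENNReal.ofReal (Real.exp (-(L+1) * N)) := by
    intro ε
    obtain ⟨v, hv⟩ := hgauss (aa ε)
    have hfmeas : Measurable (fun ω => ∑ i, aa ε i * ζ ω i) :=
      Finset.measurable_sum _ (fun i _ => (hmeas i).const_mul _)
    -- variance bound
    have hvle : (v:ℝ) ≤ 2*c/N := by
      have hEf2 : (v:ℝ) = ∑ i, ∑ j, (aa ε i * aa ε j) * ∫ ω, ζ ω i * ζ ω j ∂ℙ := by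
        have h1 : (v:ℝ) = ∫ ω, (∑ i, aa ε i * ζ ω i)^2 ∂ℙ := by
          rw [← integral_sq_gaussianReal v, ← hv,
            integral_map hfmeas.aemeasurable
              ((measurable_id'.pow_const 2).aestronglyMeasurable)]
        rw [h1]
        have h2 : ∀ ω, (∑ i, aa ε i * ζ ω i)^2
            = ∑ i, ∑ j, (aa ε i * aa ε j) * (ζ ω i * ζ ω j) := by
          intro ω
          rw [sq, Finset.sum_mul_sum]
          refine Finset.sum_congr rfl fun i _ => Finset.sum_congr rfl fun j _ => by ring
        simp only [h2]
        rw [integral_finset_sum _ (fun i _ => integrable_finset_sum _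
          (fun j _ => (hprod i j).const_mul _))]
        refine Finset.sum_congr rfl fun i _ => ?_
        rw [integral_finset_sum _ (fun j _ => (hprod i j).const_mul _)]
        exact Finset.sum_congr rfl fun j _ => integral_const_mul _ _
      have haabs : ∀ ε' i, |aa ε' i| = (N:ℝ)⁻¹ := by
        intro ε' i
        rw [haa]
        rcases Bool.eq_false_or_eq_true (ε' i) with h | h <;>
          simp [h, abs_of_nonneg (inv_nonneg.mpr hNr.le)]
      have hterm : ∀ i j, (aa ε i * aa ε j) * ∫ ω, ζ ω i * ζ ω j ∂ℙ
          ≤ (N:ℝ)⁻¹^3 * c + (if j = i then (N:ℝ)⁻¹^2 * c else 0) := by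
        intro i j
        have hb : (aa ε i * aa ε j) * ∫ ω, ζ ω i * ζ ω j ∂ℙ
            ≤ (N:ℝ)⁻¹^2 * |∫ ω, ζ ω i * ζ ω j ∂ℙ| := by
          calc (aa ε i * aa ε j) * ∫ ω, ζ ω i * ζ ω j ∂ℙ
              ≤ |(aa ε i * aa ε j) * ∫ ω, ζ ω i * ζ ω j ∂ℙ| := le_abs_self _
            _ = (N:ℝ)⁻¹^2 * |∫ ω, ζ ω i * ζ ω j ∂ℙ| := by
                rw [abs_mul, abs_mul, haabs, haabs]; ring
        by_cases hij : j = i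
        · subst hij
          rw [if_pos rfl]
          have he : ∫ ω, ζ ω j * ζ ω j ∂ℙ = ∫ ω, (ζ ω j)^2 ∂ℙ :=
            integral_congr_ae (Filter.Eventually.of_forall fun ω => by ring)
          have h0 : 0 ≤ ∫ ω, ζ ω j * ζ ω j ∂ℙ := by
            rw [he]; exact integral_nonneg fun ω => sq_nonneg _
          have h1 : |∫ ω, ζ ω j * ζ ω j ∂ℙ| ≤ c := by
            rw [abs_of_nonneg h0, he]; exact hvar j
          have h2 : (0:ℝ) ≤ (N:ℝ)⁻¹^3 * c := by positivity
          calc aa ε j * aa ε j * ∫ ω, ζ ω j * ζ ω j ∂ℙ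
              ≤ (N:ℝ)⁻¹^2 * |∫ ω, ζ ω j * ζ ω j ∂ℙ| := hb
            _ ≤ (N:ℝ)⁻¹^2 * c := mul_le_mul_of_nonneg_left h1 (by positivity)
            _ ≤ (N:ℝ)⁻¹^3 * c + (N:ℝ)⁻¹^2 * c := by linarith
        · rw [if_neg hij, add_zero]
          have h1 : |∫ ω, ζ ω i * ζ ω j ∂ℙ| ≤ c / N := by
            rw [le_div_iff₀ hNr, mul_comm]
            exact hcov i j (fun h => hij h.symm)
          calc (aa ε i * aa ε j) * ∫ ω, ζ ω i * ζ ω j ∂ℙ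
              ≤ (N:ℝ)⁻¹^2 * |∫ ω, ζ ω i * ζ ω j ∂ℙ| := hb
            _ ≤ (N:ℝ)⁻¹^2 * (c/N) := by
                exact mul_le_mul_of_nonneg_left h1 (by positivity)
            _ = (N:ℝ)⁻¹^3 * c := by rw [div_eq_mul_inv]; ring
      calc (v:ℝ) = ∑ i, ∑ j, (aa ε i * aa ε j) * ∫ ω, ζ ω i * ζ ω j ∂ℙ := hEf2
        _ ≤ ∑ i : Fin N, ∑ j : Fin N,
            ((N:ℝ)⁻¹^3 * c + (if j = i then (N:ℝ)⁻¹^2 * c else 0)) :=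
            Finset.sum_le_sum fun i _ => Finset.sum_le_sum fun j _ => hterm i j
        _ = 2*c/N := by
            simp [Finset.sum_add_distrib, Finset.sum_ite_eq', Finset.card_univ]
            field_simp
            ring
    -- Chernoff
    set t : ℝ := K*N/(4*c) with htdef
    have ht : 0 ≤ t := by positivity
    have hA : ℙ {ω | K ≤ ∑ i, aa ε i * ζ ω i} = gaussianReal 0 v {x | K ≤ x} := by
      rw [← hv, show {x : ℝ | K ≤ x} = Set.Ici K from rfl,
        Measure.map_apply hfmeas measurableSet_Ici]
      rfl
    rw [hA]
    refine (gaussianReal_tail v K t ht).trans ?_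
    apply ENNReal.ofReal_le_ofReal
    apply Real.exp_le_exp.mpr
    have h1 : (v:ℝ)*t^2/2 ≤ (2*c/N)*t^2/2 := by
      have := sq_nonneg t
      nlinarith
    have h2 : (2*c/N)*t^2/2 - t*K = -(9/8) * ((L+1) * N) := by
      rw [htdef]
      field_simp
      linear_combination (-24) * hK2
    nlinarith [mul_nonneg (by positivity : (0:ℝ) ≤ L+1) hNr.le]
  -- union bound
  have hsub : {ω : Ω | K ≤ (N:ℝ)⁻¹ * ∑ i, |ζ ω i|}
      ⊆ ⋃ ε : Fin N → Bool, {ω | K ≤ ∑ i, aa ε i * ζ ω i} := by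
    intro ω hω
    refine Set.mem_iUnion.mpr ⟨fun i => decide (0 ≤ ζ ω i), ?_⟩
    simp only [Set.mem_setOf_eq] at hω ⊢
    have : ∑ i, aa (fun i => decide (0 ≤ ζ ω i)) i * ζ ω i
        = (N:ℝ)⁻¹ * ∑ i, |ζ ω i| := by
      rw [Finset.mul_sum]
      refine Finset.sum_congr rfl fun i _ => ?_
      rcases le_or_gt 0 (ζ ω i) with h | h
      · simp [haa, h, abs_of_nonneg h]
      · simp [haa, not_le.mpr h, abs_of_neg h]
    rw [this]
    exact hω
  calc ℙ {ω : Ω | K ≤ (N:ℝ)⁻¹ * ∑ i, |ζ ω i|}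
      ≤ ℙ (⋃ ε : Fin N → Bool, {ω | K ≤ ∑ i, aa ε i * ζ ω i}) := measure_mono hsub
    _ ≤ ∑ ε : Fin N → Bool, ℙ {ω | K ≤ ∑ i, aa ε i * ζ ω i} := measure_iUnion_fintype_le _ _
    _ ≤ ∑ _ε : Fin N → Bool, ENNReal.ofReal (Real.exp (-(L+1) * N)) :=
        Finset.sum_le_sum fun ε _ => hper ε
    _ = ENNReal.ofReal (Real.exp (-(N:ℝ))) := by
        rw [Finset.sum_const, Finset.card_univ, Fintype.card_fun]
        simp only [Fintype.card_bool, Fintype.card_fin, nsmul_eq_mul]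
        rw [← ENNReal.ofReal_natCast (2^N), ← ENNReal.ofReal_mul (by positivity)]
        congr 1
        push_cast
        rw [show ((2:ℝ)^N : ℝ) = Real.exp ((N:ℝ) * L) by
          rw [hLdef, Real.exp_nat_mul, Real.exp_log (by norm_num : (0:ℝ) < 2)]]
        rw [← Real.exp_add]
        congr 1
        ring
end
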